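/- Assume each inclusion C_n ⊆ A_n is regular. Let S be the collection of all subsets F of A of the form F = closure of ⋃_n M_n, where (M_n)_{n∈ℕ} is a sequence such that each M_n is a slice for the inclusion C_n ⊆ A_n and M_n ⊆ M_{n+1} for all n. Then the linear span of ⋃_{F ∈ S} F is dense in A. -/

import Mathlib

variable {A : Type*} [NonUnitalCStarAlgebra A]

/-- The set of normalisers of `D` inside the subset `B` of `A`:
`N_B(D) = {m ∈ B : m* D m ⊆ D and m D m* ⊆ D}`. -/
def relNormalizers (B D : Set A) : Set A :=
  {m | m ∈ B ∧ (∀ c ∈ D, star m * c * m ∈ D) ∧ (∀ c ∈ D, m * c * star m ∈ D)}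

/-- The inclusion `D ⊆ B` is regular: the smallest closed *-subalgebra of `B`
containing `N_B(D)` is `B` itself. -/
def IsRegularIncl (B D : Set A) : Prop :=
  closure ((NonUnitalStarAlgebra.adjoin ℂ (relNormalizers B D) :
    NonUnitalStarSubalgebra ℂ A) : Set A) = B

/-- A slice for the inclusion `D ⊆ B`: a closed linear subspace `M` of `B` with
`M ⊆ N_B(D)`, `DM ⊆ M` and `MD ⊆ M`. -/
def IsSlice (B D M : Set A) : Prop :=
  IsClosed M ∧ (0 : A) ∈ M ∧ (∀ x ∈ M, ∀ y ∈ M, x + y ∈ M) ∧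
    (∀ (z : ℂ), ∀ x ∈ M, z • x ∈ M) ∧ M ⊆ relNormalizers B D ∧
    (∀ d ∈ D, ∀ m ∈ M, d * m ∈ M) ∧ (∀ d ∈ D, ∀ m ∈ M, m * d ∈ M)

def genSet (m : A) (C : Set A) : Set A :=
  {x | x = m ∨ (∃ c ∈ C, x = c * m) ∨ (∃ c ∈ C, x = m * c) ∨
    (∃ c ∈ C, ∃ c' ∈ C, x = c * m * c')}

variable (Ck : NonUnitalStarSubalgebra ℂ A) (m : A)
  (hm2 : ∀ c ∈ (Ck : Set A), star m * c * m ∈ (Ck : Set A))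
  (hm3 : ∀ c ∈ (Ck : Set A), m * c * star m ∈ (Ck : Set A))

section
include hm2

lemma gen_left : ∀ x ∈ genSet m (Ck : Set A), ∀ c ∈ (Ck : Set A),
    star x * c * m ∈ (Ck : Set A) := by
  rintro x (rfl | ⟨c1, hc1, rfl⟩ | ⟨c1, hc1, rfl⟩ | ⟨c1, hc1, c1', hc1', rfl⟩) c hc
  · exact hm2 c hc
  · have := hm2 _ (mul_mem (star_mem hc1) hc)
    simpa only [star_mul, mul_assoc] using this
  · have := mul_mem (star_mem hc1) (hm2 c hc)
    simpa only [SetLike.mem_coe, star_mul, mul_assoc] using this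
  · have := mul_mem (star_mem hc1') (hm2 _ (mul_mem (star_mem hc1) hc))
    simpa only [SetLike.mem_coe, star_mul, mul_assoc] using this

lemma gen_pair : ∀ x ∈ genSet m (Ck : Set A), ∀ y ∈ genSet m (Ck : Set A),
    ∀ c ∈ (Ck : Set A), star x * c * y ∈ (Ck : Set A) := by
  rintro x hx y (rfl | ⟨c1, hc1, rfl⟩ | ⟨c1, hc1, rfl⟩ | ⟨c1, hc1, c1', hc1', rfl⟩) c hc
  · exact gen_left Ck _ hm2 x hx c hc
  · have := gen_left Ck _ hm2 x hx _ (mul_mem hc hc1)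
    simpa only [mul_assoc] using this
  · have := mul_mem (gen_left Ck _ hm2 x hx c hc) hc1
    simpa only [SetLike.mem_coe, mul_assoc] using this
  · have := mul_mem (gen_left Ck _ hm2 x hx _ (mul_mem hc hc1)) hc1'
    simpa only [SetLike.mem_coe, mul_assoc] using this

end

section
include hm3

lemma gen_right : ∀ y ∈ genSet m (Ck : Set A), ∀ c ∈ (Ck : Set A),
    m * c * star y ∈ (Ck : Set A) := by
  rintro y (rfl | ⟨c1, hc1, rfl⟩ | ⟨c1, hc1, rfl⟩ | ⟨c1, hc1, c1', hc1', rfl⟩) c hc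
  · exact hm3 c hc
  · have := mul_mem (hm3 c hc) (star_mem hc1)
    simpa only [SetLike.mem_coe, star_mul, mul_assoc] using this
  · have := hm3 _ (mul_mem hc (star_mem hc1))
    simpa only [star_mul, mul_assoc] using this
  · have := mul_mem (hm3 _ (mul_mem hc (star_mem hc1'))) (star_mem hc1)
    simpa only [SetLike.mem_coe, star_mul, mul_assoc] using this

lemma gen_pair' : ∀ x ∈ genSet m (Ck : Set A), ∀ y ∈ genSet m (Ck : Set A),
    ∀ c ∈ (Ck : Set A), x * c * star y ∈ (Ck : Set A) := by
  rintro x (rfl | ⟨c1, hc1, rfl⟩ | ⟨c1, hc1, rfl⟩ | ⟨c1, hc1, c1', hc1', rfl⟩) y hy c hc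
  · exact gen_right Ck _ hm3 y hy c hc
  · have := mul_mem hc1 (gen_right Ck _ hm3 y hy c hc)
    simpa only [SetLike.mem_coe, mul_assoc] using this
  · have := gen_right Ck _ hm3 y hy _ (mul_mem hc1 hc)
    simpa only [mul_assoc] using this
  · have := mul_mem hc1 (gen_right Ck _ hm3 y hy _ (mul_mem hc1' hc))
    simpa only [SetLike.mem_coe, mul_assoc] using this

end

section
include hm2

lemma span_pair : ∀ x ∈ Submodule.span ℂ (genSet m (Ck : Set A)),
    ∀ y ∈ Submodule.span ℂ (genSet m (Ck : Set A)),
    ∀ c ∈ (Ck : Set A), star x * c * y ∈ (Ck : Set A) := by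
  intro x hx
  refine Submodule.span_induction ?_ ?_ ?_ ?_ hx
  · intro g hg y hy
    refine Submodule.span_induction ?_ ?_ ?_ ?_ hy
    · intro g' hg' c hc
      exact gen_pair Ck _ hm2 g hg g' hg' c hc
    · intro c hc
      simpa using zero_mem Ck
    · intro y1 y2 _ _ h1 h2 c hc
      have := add_mem (h1 c hc) (h2 c hc)
      simpa only [SetLike.mem_coe, mul_add] using this
    · intro z y1 _ h1 c hc
      have := SMulMemClass.smul_mem z (h1 c hc)
      simpa only [SetLike.mem_coe, mul_smul_comm] using this
  · intro y hy c hc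
    simpa using zero_mem Ck
  · intro x1 x2 _ _ h1 h2 y hy c hc
    have := add_mem (h1 y hy c hc) (h2 y hy c hc)
    simpa only [SetLike.mem_coe, star_add, add_mul] using this
  · intro z x1 _ h1 y hy c hc
    have := SMulMemClass.smul_mem (star z) (h1 y hy c hc)
    simpa only [SetLike.mem_coe, star_smul, smul_mul_assoc] using this

end

section
include hm3

lemma span_pair' : ∀ x ∈ Submodule.span ℂ (genSet m (Ck : Set A)),
    ∀ y ∈ Submodule.span ℂ (genSet m (Ck : Set A)),
    ∀ c ∈ (Ck : Set A), x * c * star y ∈ (Ck : Set A) := by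
  intro x hx
  refine Submodule.span_induction ?_ ?_ ?_ ?_ hx
  · intro g hg y hy
    refine Submodule.span_induction ?_ ?_ ?_ ?_ hy
    · intro g' hg' c hc
      exact gen_pair' Ck _ hm3 g hg g' hg' c hc
    · intro c hc
      simpa using zero_mem Ck
    · intro y1 y2 _ _ h1 h2 c hc
      have := add_mem (h1 c hc) (h2 c hc)
      simpa only [SetLike.mem_coe, star_add, mul_add] using this
    · intro z y1 _ h1 c hc
      have := SMulMemClass.smul_mem (star z) (h1 c hc)
      simpa only [SetLike.mem_coe, star_smul, mul_smul_comm] using this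
  · intro y hy c hc
    simpa using zero_mem Ck
  · intro x1 x2 _ _ h1 h2 y hy c hc
    have := add_mem (h1 y hy c hc) (h2 y hy c hc)
    simpa only [SetLike.mem_coe, add_mul] using this
  · intro z x1 _ h1 y hy c hc
    have := SMulMemClass.smul_mem z (h1 y hy c hc)
    simpa only [SetLike.mem_coe, smul_mul_assoc] using this

end

lemma span_mul_left : ∀ d ∈ (Ck : Set A), ∀ x ∈ Submodule.span ℂ (genSet m (Ck : Set A)),
    d * x ∈ Submodule.span ℂ (genSet m (Ck : Set A)) := by
  intro d hd x hx
  refine Submodule.span_induction ?_ ?_ ?_ ?_ hx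
  · rintro g (rfl | ⟨c1, hc1, rfl⟩ | ⟨c1, hc1, rfl⟩ | ⟨c1, hc1, c1', hc1', rfl⟩)
    · exact Submodule.subset_span (Or.inr (Or.inl ⟨d, hd, rfl⟩))
    · exact Submodule.subset_span (Or.inr (Or.inl ⟨d * c1, mul_mem hd hc1, by rw [mul_assoc]⟩))
    · exact Submodule.subset_span (Or.inr (Or.inr (Or.inr ⟨d, hd, c1, hc1, by rw [mul_assoc]⟩)))
    · exact Submodule.subset_span (Or.inr (Or.inr (Or.inr
        ⟨d * c1, mul_mem hd hc1, c1', hc1', by noncomm_ring⟩)))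
  · simpa using zero_mem _
  · intro y1 y2 _ _ h1 h2
    have := add_mem h1 h2
    simpa only [mul_add] using this
  · intro z y1 _ h1
    have := Submodule.smul_mem _ z h1
    simpa only [mul_smul_comm] using this

lemma span_mul_right : ∀ d ∈ (Ck : Set A), ∀ x ∈ Submodule.span ℂ (genSet m (Ck : Set A)),
    x * d ∈ Submodule.span ℂ (genSet m (Ck : Set A)) := by
  intro d hd x hx
  refine Submodule.span_induction ?_ ?_ ?_ ?_ hx
  · rintro g (rfl | ⟨c1, hc1, rfl⟩ | ⟨c1, hc1, rfl⟩ | ⟨c1, hc1, c1', hc1', rfl⟩)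
    · exact Submodule.subset_span (Or.inr (Or.inr (Or.inl ⟨d, hd, rfl⟩)))
    · exact Submodule.subset_span (Or.inr (Or.inr (Or.inr ⟨c1, hc1, d, hd, rfl⟩)))
    · exact Submodule.subset_span (Or.inr (Or.inr (Or.inl ⟨c1 * d, mul_mem hc1 hd, by noncomm_ring⟩)))
    · exact Submodule.subset_span (Or.inr (Or.inr (Or.inr
        ⟨c1, hc1, c1' * d, mul_mem hc1' hd, by noncomm_ring⟩)))
  · simpa using zero_mem _
  · intro y1 y2 _ _ h1 h2
    have := add_mem h1 h2
    simpa only [add_mul] using this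
  · intro z y1 _ h1
    have := Submodule.smul_mem _ z h1
    simpa only [smul_mul_assoc] using this

lemma isSlice_closure_span (Ak : NonUnitalStarSubalgebra ℂ A) (hAc : IsClosed (Ak : Set A))
    (hCc : IsClosed (Ck : Set A)) (hsub : (Ck : Set A) ⊆ (Ak : Set A))
    (hm : m ∈ relNormalizers (Ak : Set A) (Ck : Set A)) :
    IsSlice (Ak : Set A) (Ck : Set A)
      (closure ↑(Submodule.span ℂ (genSet m (Ck : Set A)))) := by
  obtain ⟨hmA, hm2, hm3⟩ := hm
  set p := Submodule.span ℂ (genSet m (Ck : Set A)) with hp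
  have hcl : closure (p : Set A) = (p.topologicalClosure : Set A) :=
    (Submodule.topologicalClosure_coe p).symm
  refine ⟨isClosed_closure, subset_closure (zero_mem p), ?_, ?_, ?_, ?_, ?_⟩
  · intro x hx y hy
    rw [hcl] at hx hy ⊢
    exact add_mem hx hy
  · intro z x hx
    rw [hcl] at hx ⊢
    exact Submodule.smul_mem _ z hx
  · intro x hx
    have hgenA : genSet m (Ck : Set A) ⊆ (Ak : Set A) := by
      rintro g (rfl | ⟨c, hc, rfl⟩ | ⟨c, hc, rfl⟩ | ⟨c, hc, c', hc', rfl⟩)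
      exacts [hmA, mul_mem (hsub hc) hmA, mul_mem hmA (hsub hc),
        mul_mem (mul_mem (hsub hc) hmA) (hsub hc')]
    have hspanA : (p : Set A) ⊆ (Ak : Set A) := fun y hy =>
      Submodule.span_induction (fun g hg => hgenA hg) (zero_mem Ak)
        (fun a b _ _ ha hb => add_mem ha hb)
        (fun z a _ ha => SMulMemClass.smul_mem z ha) hy
    refine ⟨closure_minimal hspanA hAc hx, ?_, ?_⟩
    · intro c hc
      have hmaps : Set.MapsTo (fun y => star y * c * y) (p : Set A) (Ck : Set A) :=
        fun y hy => span_pair Ck m hm2 y hy y hy c hc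
      have := map_mem_closure ((continuous_star.mul continuous_const).mul continuous_id)
        hx hmaps
      rwa [hCc.closure_eq] at this
    · intro c hc
      have hmaps : Set.MapsTo (fun y => y * c * star y) (p : Set A) (Ck : Set A) :=
        fun y hy => span_pair' Ck m hm3 y hy y hy c hc
      have := map_mem_closure ((continuous_id.mul continuous_const).mul continuous_star)
        hx hmaps
      rwa [hCc.closure_eq] at this
  · intro d hd x hx
    exact map_mem_closure (continuous_const.mul continuous_id) hx
      (fun y hy => span_mul_left Ck m d hd y hy)
  · intro d hd x hx
    exact map_mem_closure (f := fun y => y * d) (continuous_id.mul continuous_const) hx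
      (fun y hy => span_mul_right Ck m d hd y hy)

lemma isSlice_zero (Ak : NonUnitalStarSubalgebra ℂ A) :
    IsSlice (Ak : Set A) (Ck : Set A) {0} := by
  refine ⟨isClosed_singleton, rfl, ?_, ?_, ?_, ?_, ?_⟩
  · rintro x rfl y rfl; simp
  · rintro z x rfl; simp
  · rintro x rfl
    exact ⟨zero_mem Ak, fun c hc => by simpa using zero_mem Ck,
      fun c hc => by simpa using zero_mem Ck⟩
  · rintro d hd x rfl; simp
  · rintro d hd x rfl; simp

lemma adjoin_subset_span (Ak : NonUnitalStarSubalgebra ℂ A) :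
    ((NonUnitalStarAlgebra.adjoin ℂ (relNormalizers (Ak : Set A) (Ck : Set A)) :
      NonUnitalStarSubalgebra ℂ A) : Set A)
      ⊆ ↑(Submodule.span ℂ (relNormalizers (Ak : Set A) (Ck : Set A))) := by
  set N := relNormalizers (Ak : Set A) (Ck : Set A) with hN
  have hmulN : ∀ x ∈ N, ∀ y ∈ N, x * y ∈ N := by
    rintro x ⟨hxA, hx2, hx3⟩ y ⟨hyA, hy2, hy3⟩
    refine ⟨mul_mem hxA hyA, fun c hc => ?_, fun c hc => ?_⟩
    · have := hy2 _ (hx2 c hc); simpa only [star_mul, mul_assoc] using this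
    · have := hx3 _ (hy3 c hc); simpa only [star_mul, mul_assoc] using this
  have hstarN : ∀ x ∈ N, star x ∈ N := by
    rintro x ⟨hxA, hx2, hx3⟩
    exact ⟨star_mem hxA, fun c hc => by simpa [star_star] using hx3 c hc,
      fun c hc => by simpa [star_star] using hx2 c hc⟩
  have hmul : ∀ x ∈ Submodule.span ℂ N, ∀ y ∈ Submodule.span ℂ N,
      x * y ∈ Submodule.span ℂ N := by
    intro x hx
    refine Submodule.span_induction ?_ ?_ ?_ ?_ hx
    · intro g hg y hy
      refine Submodule.span_induction ?_ ?_ ?_ ?_ hy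
      · intro g' hg'; exact Submodule.subset_span (hmulN g hg g' hg')
      · simpa using zero_mem _
      · intro a b _ _ ha hb; have := add_mem ha hb; simpa only [mul_add] using this
      · intro z a _ ha; have := Submodule.smul_mem _ z ha
        simpa only [mul_smul_comm] using this
    · intro y hy; simpa using zero_mem (Submodule.span ℂ N)
    · intro a b _ _ ha hb y hy; have := add_mem (ha y hy) (hb y hy)
      simpa only [add_mul] using this
    · intro z a _ ha y hy; have := Submodule.smul_mem _ z (ha y hy)
      simpa only [smul_mul_assoc] using this
  have hstar : ∀ x ∈ Submodule.span ℂ N, star x ∈ Submodule.span ℂ N := by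
    intro x hx
    refine Submodule.span_induction ?_ ?_ ?_ ?_ hx
    · intro g hg; exact Submodule.subset_span (hstarN g hg)
    · simpa using zero_mem (Submodule.span ℂ N)
    · intro a b _ _ ha hb; have := add_mem ha hb; simpa only [star_add] using this
    · intro z a _ ha; have := Submodule.smul_mem _ (star z) ha
      simpa only [star_smul] using this
  intro x hx
  refine NonUnitalStarAlgebra.adjoin_induction ℂ ?_ ?_ ?_ ?_ ?_ ?_ hx
  · intro g hg; exact Submodule.subset_span hg
  · intro a b _ _ ha hb; exact add_mem ha hb
  · exact zero_mem _
  · intro a b ha' hb' ha hb; exact hmul a ha b hb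
  · intro z a _ ha; exact Submodule.smul_mem _ z ha
  · intro a _ ha; exact hstar a ha

theorem stmt6
    (A_ C_ : ℕ → NonUnitalStarSubalgebra ℂ A)
    (hAclosed : ∀ n, IsClosed (A_ n : Set A))
    (hCclosed : ∀ n, IsClosed (C_ n : Set A))
    (hAmono : ∀ n, (A_ n : Set A) ⊆ (A_ (n + 1) : Set A))
    (hCmono : ∀ n, (C_ n : Set A) ⊆ (C_ (n + 1) : Set A))
    (hCA : ∀ n, (C_ n : Set A) ⊆ (A_ n : Set A))
    (hAdense : Dense (⋃ n, (A_ n : Set A)))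
    (hNormIncl : ∀ n, relNormalizers (A_ n : Set A) (C_ n : Set A) ⊆
      relNormalizers (A_ (n + 1) : Set A) (C_ (n + 1) : Set A))
    (hRegn : ∀ n, IsRegularIncl (A_ n : Set A) (C_ n : Set A)) :
    Dense ((Submodule.span ℂ (⋃ F ∈ {F : Set A | ∃ M : ℕ → Set A,
        (∀ n, IsSlice (A_ n : Set A) (C_ n : Set A) (M n)) ∧
        (∀ n, M n ⊆ M (n + 1)) ∧ F = closure (⋃ n, M n)}, F) : Submodule ℂ A) : Set A) := by
  classical
  set S : Set (Set A) := {F : Set A | ∃ M : ℕ → Set A,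
      (∀ n, IsSlice (A_ n : Set A) (C_ n : Set A) (M n)) ∧
      (∀ n, M n ⊆ M (n + 1)) ∧ F = closure (⋃ n, M n)} with hS
  set V : Submodule ℂ A := Submodule.span ℂ (⋃ F ∈ S, F) with hV
  have key : ∀ n, ∀ m ∈ relNormalizers (A_ n : Set A) (C_ n : Set A), m ∈ (V : Set A) := by
    intro n m hm
    have hup : ∀ k, n ≤ k → m ∈ relNormalizers (A_ k : Set A) (C_ k : Set A) := by
      intro k hk
      induction k, hk using Nat.le_induction with
      | base => exact hm
      | succ k hk ih => exact hNormIncl k ih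
    set M : ℕ → Set A := fun k =>
      if n ≤ k then closure ↑(Submodule.span ℂ (genSet m (C_ k : Set A))) else {0} with hM
    have hslice : ∀ k, IsSlice (A_ k : Set A) (C_ k : Set A) (M k) := by
      intro k
      by_cases h : n ≤ k
      · simp only [hM, if_pos h]
        exact isSlice_closure_span (C_ k) m (A_ k) (hAclosed k)
          (hCclosed k) (hCA k) (hup k h)
      · simp only [hM, if_neg h]
        exact isSlice_zero (C_ k) (A_ k)
    have hmono : ∀ k, M k ⊆ M (k + 1) := by
      intro k
      by_cases h : n ≤ k
      · have h' : n ≤ k + 1 := Nat.le_succ_of_le h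
        simp only [hM, if_pos h, if_pos h']
        refine closure_mono (Submodule.span_mono ?_)
        rintro g (rfl | ⟨c, hc, rfl⟩ | ⟨c, hc, rfl⟩ | ⟨c, hc, c', hc', rfl⟩)
        · exact Or.inl rfl
        · exact Or.inr (Or.inl ⟨c, hCmono k hc, rfl⟩)
        · exact Or.inr (Or.inr (Or.inl ⟨c, hCmono k hc, rfl⟩))
        · exact Or.inr (Or.inr (Or.inr ⟨c, hCmono k hc, c', hCmono k hc', rfl⟩))
      · intro x hx
        rw [hM] at hx
        simp only [if_neg h] at hx
        rw [Set.mem_singleton_iff] at hx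
        subst hx
        exact (hslice (k + 1)).2.1
    have hmemM : m ∈ M n := by
      simp only [hM, if_pos le_rfl]
      exact subset_closure (Submodule.subset_span (Or.inl rfl))
    have hmemF : m ∈ closure (⋃ k, M k) := subset_closure (Set.mem_iUnion.2 ⟨n, hmemM⟩)
    exact Submodule.subset_span
      (Set.mem_biUnion (show closure (⋃ k, M k) ∈ S from ⟨M, hslice, hmono, rfl⟩) hmemF)
  have hAn : ∀ n, (A_ n : Set A) ⊆ closure (V : Set A) := by
    intro n
    rw [← hRegn n]
    refine closure_mono ?_
    intro x hx
    have h1 := adjoin_subset_span (C_ n) (A_ n) hx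
    have h2 : Submodule.span ℂ (relNormalizers (A_ n : Set A) (C_ n : Set A)) ≤ V :=
      Submodule.span_le.2 (fun y hy => key n y hy)
    exact h2 h1
  have hsub : closure (⋃ n, (A_ n : Set A)) ⊆ closure (V : Set A) :=
    closure_minimal (Set.iUnion_subset hAn) isClosed_closure
  exact fun x => hsub (hAdense x)
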